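/- Any board of 7 distinct points in F_3^4 contains at most 5 sets. -/
import Mathlib


abbrev Pt := Fin 4 → ZMod 3

def numSets (B : Finset Pt) : ℕ :=
  ((B.powersetCard 3).filter (fun S => S.sum id = 0)).card

def IsMagicSquare (B : Finset Pt) : Prop :=
  ∃ (p : Pt) (V : Submodule (ZMod 3) Pt), Module.finrank (ZMod 3) V = 2 ∧
    (B : Set Pt) = (fun v => p + v) '' (V : Set Pt)

lemma cancel2 : ∀ a b : ZMod 3, a + a = b + b → a = b := by decide
lemma three_zero : ∀ a : ZMod 3, a + a + a = 0 := by decide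

lemma pt_cancel2 (a b : Pt) (h : a + a = b + b) : a = b := by
  funext i; exact cancel2 _ _ (congrFun h i)

lemma pt_three (a : Pt) : a + a + a = 0 := by
  funext i; exact three_zero (a i)

-- third point determined
lemma third_eq (S : Finset Pt) (h3 : S.card = 3) (hsum : S.sum id = 0)
    (a b : Pt) (ha : a ∈ S) (hb : b ∈ S) (hab : a ≠ b) :
    S = {a, b, -(a+b)} := by
  obtain ⟨c, hc⟩ : ∃ c, (S.erase a).erase b = {c} := by
    apply Finset.card_eq_one.mp
    rw [Finset.card_erase_of_mem, Finset.card_erase_of_mem ha, h3]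
    exact Finset.mem_erase.mpr ⟨Ne.symm hab, hb⟩
  have hcmem : c ∈ (S.erase a).erase b := hc ▸ Finset.mem_singleton_self c
  have hcS : c ∈ S := Finset.mem_of_mem_erase (Finset.mem_of_mem_erase hcmem)
  have hca : c ≠ a := Finset.ne_of_mem_erase (Finset.mem_of_mem_erase hcmem)
  have hcb : c ≠ b := Finset.ne_of_mem_erase hcmem
  have hSeq : S = {a, b, c} := by
    apply Finset.eq_of_subset_of_card_le
    · intro x hx
      simp only [Finset.mem_insert, Finset.mem_singleton]
      by_cases h1 : x = a
      · exact Or.inl h1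
      by_cases h2 : x = b
      · exact Or.inr (Or.inl h2)
      · right; right
        have : x ∈ (S.erase a).erase b := Finset.mem_erase.mpr ⟨h2, Finset.mem_erase.mpr ⟨h1, hx⟩⟩
        rw [hc] at this
        exact Finset.mem_singleton.mp this
    · rw [h3]
      calc ({a, b, c} : Finset Pt).card ≤ S.card := Finset.card_le_card ?_
        _ = 3 := h3
      intro x hx
      rcases Finset.mem_insert.mp hx with rfl | hx'
      · exact ha
      rcases Finset.mem_insert.mp hx' with rfl | hx''
      · exact hb
      · rw [Finset.mem_singleton.mp hx'']; exact hcS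
  have hsum' : a + b + c = 0 := by
    rw [hSeq] at hsum
    rw [Finset.sum_insert (by simp [hab, Ne.symm hca]),
        Finset.sum_insert (Finset.notMem_singleton.mpr (Ne.symm hcb))] at hsum
    simpa [add_assoc] using hsum
  have : c = -(a+b) := eq_neg_of_add_eq_zero_right hsum'
  rw [hSeq, this]

-- two lines sharing two points are equal
lemma line_unique (S T : Finset Pt) (hS3 : S.card = 3) (hSsum : S.sum id = 0)
    (hT3 : T.card = 3) (hTsum : T.sum id = 0)
    (a b : Pt) (haS : a ∈ S) (hbS : b ∈ S) (haT : a ∈ T) (hbT : b ∈ T) (hab : a ≠ b) :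
    S = T := by
  rw [third_eq S hS3 hSsum a b haS hbS hab, third_eq T hT3 hTsum a b haT hbT hab]

-- extract {p,x,y} form
lemma exists_xy (S : Finset Pt) (h3 : S.card = 3) (p : Pt) (hp : p ∈ S) :
    ∃ x y, x ≠ y ∧ p ≠ x ∧ p ≠ y ∧ S = {p, x, y} := by
  obtain ⟨a, b, c, hab, hac, hbc, rfl⟩ := Finset.card_eq_three.mp h3
  simp only [Finset.mem_insert, Finset.mem_singleton] at hp
  rcases hp with rfl | rfl | rfl
  · exact ⟨b, c, hbc, hab, hac, rfl⟩
  · exact ⟨a, c, hac, Ne.symm hab, hbc, by ext x; simp; tauto⟩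
  · refine ⟨a, b, hab, Ne.symm hac, Ne.symm hbc, ?_⟩
    ext x; simp; tauto

lemma zkey : ∀ u1 u2 u3 v2 v3 pz : ZMod 3,
    u1+u2+u3 = 0 → u1+v2+v3 = 0 → u2+v2 = -pz → u3+v3 = -pz → u1 = pz := by decide

lemma pt_zkey (u1 u2 u3 v2 v3 p : Pt) (h1 : u1+u2+u3 = 0) (h2 : u1+v2+v3 = 0)
    (h3 : u2+v2 = -p) (h4 : u3+v3 = -p) : u1 = p := by
  funext i
  exact zkey _ _ _ _ _ _ (congrFun h1 i) (congrFun h2 i) (congrFun h3 i) (congrFun h4 i)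

set_option maxHeartbeats 2000000

theorem stmt8 (B : Finset Pt) (hB : B.card = 7) : numSets B ≤ 5 := by
  by_contra hcon
  push_neg at hcon
  set L := ((B.powersetCard 3).filter (fun S => S.sum id = 0)) with hLdef
  have hcon6 : 6 ≤ L.card := hcon
  have hmemL : ∀ S, S ∈ L ↔ S ⊆ B ∧ S.card = 3 ∧ S.sum id = 0 := by
    intro S
    simp [hLdef, Finset.mem_powersetCard, and_assoc]
  -- degree sum
  have hdeg : ∑ p ∈ B, (L.filter (fun S => p ∈ S)).card = 3 * L.card := by
    calc ∑ p ∈ B, (L.filter (fun S => p ∈ S)).card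
        = ∑ p ∈ B, ∑ S ∈ L, if p ∈ S then 1 else 0 := by
          exact Finset.sum_congr rfl fun p _ => Finset.card_filter _ _
      _ = ∑ S ∈ L, ∑ p ∈ B, if p ∈ S then 1 else 0 := Finset.sum_comm
      _ = ∑ S ∈ L, (B.filter (fun p => p ∈ S)).card := by
          exact Finset.sum_congr rfl fun S _ => (Finset.card_filter _ _).symm
      _ = ∑ S ∈ L, S.card := by
          refine Finset.sum_congr rfl fun S hS => ?_
          rw [Finset.filter_mem_eq_inter, Finset.inter_eq_right.mpr ((hmemL S).mp hS).1]
      _ = ∑ S ∈ L, 3 := Finset.sum_congr rfl fun S hS => ((hmemL S).mp hS).2.1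
      _ = 3 * L.card := by rw [Finset.sum_const, smul_eq_mul, mul_comm]
  -- degree bound
  have hdle : ∀ p ∈ B, (L.filter (fun S => p ∈ S)).card ≤ 3 := by
    intro p hp
    set Lp := L.filter (fun S => p ∈ S) with hLp
    have hdisj : ∀ S ∈ Lp, ∀ T ∈ Lp, S ≠ T → Disjoint (S.erase p) (T.erase p) := by
      intro S hS T hT hST
      rw [Finset.disjoint_left]
      intro q hqS hqT
      obtain ⟨hqp, hqS'⟩ := Finset.mem_erase.mp hqS
      obtain ⟨_, hqT'⟩ := Finset.mem_erase.mp hqT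
      obtain ⟨hSL, hpS⟩ := Finset.mem_filter.mp hS
      obtain ⟨hTL, hpT⟩ := Finset.mem_filter.mp hT
      exact hST (line_unique S T ((hmemL S).mp hSL).2.1 ((hmemL S).mp hSL).2.2
        ((hmemL T).mp hTL).2.1 ((hmemL T).mp hTL).2.2 p q hpS hqS' hpT hqT' (Ne.symm hqp))
    have hcard : (Lp.biUnion (fun S => S.erase p)).card = 2 * Lp.card := by
      rw [Finset.card_biUnion hdisj]
      calc ∑ S ∈ Lp, (S.erase p).card = ∑ S ∈ Lp, 2 := by
            refine Finset.sum_congr rfl fun S hS => ?_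
            obtain ⟨hSL, hpS⟩ := Finset.mem_filter.mp hS
            rw [Finset.card_erase_of_mem hpS, ((hmemL S).mp hSL).2.1]
        _ = 2 * Lp.card := by rw [Finset.sum_const, smul_eq_mul, mul_comm]
    have hsub : Lp.biUnion (fun S => S.erase p) ⊆ B.erase p := by
      intro q hq
      obtain ⟨S, hS, hqS⟩ := Finset.mem_biUnion.mp hq
      obtain ⟨hqp, hqS'⟩ := Finset.mem_erase.mp hqS
      obtain ⟨hSL, _⟩ := Finset.mem_filter.mp hS
      exact Finset.mem_erase.mpr ⟨hqp, ((hmemL S).mp hSL).1 hqS'⟩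
    have := Finset.card_le_card hsub
    rw [hcard, Finset.card_erase_of_mem hp, hB] at this
    omega
  -- a point of degree 3
  obtain ⟨p, hpB, hLp3⟩ : ∃ p ∈ B, (L.filter (fun S => p ∈ S)).card = 3 := by
    by_contra h
    push_neg at h
    have hle : ∀ q ∈ B, (L.filter (fun S => q ∈ S)).card ≤ 2 := by
      intro q hq
      have h1 := hdle q hq
      have h2 := h q hq
      omega
    have : ∑ q ∈ B, (L.filter (fun S => q ∈ S)).card ≤ ∑ q ∈ B, 2 :=
      Finset.sum_le_sum hle
    rw [hdeg, Finset.sum_const, smul_eq_mul, hB] at this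
    omega
  -- three lines through p
  obtain ⟨S1, S2, S3, h12, h13, h23, hLpeq⟩ := Finset.card_eq_three.mp hLp3
  have hmemLp : ∀ S, S ∈ L.filter (fun S => p ∈ S) ↔ S ∈ L ∧ p ∈ S := fun S => Finset.mem_filter
  have hS1 : S1 ∈ L ∧ p ∈ S1 := (hmemLp S1).mp (by rw [hLpeq]; simp)
  have hS2 : S2 ∈ L ∧ p ∈ S2 := (hmemLp S2).mp (by rw [hLpeq]; simp)
  have hS3 : S3 ∈ L ∧ p ∈ S3 := (hmemLp S3).mp (by rw [hLpeq]; simp)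
  -- lines through p intersect only at p
  have inter_p : ∀ S T, S ∈ L → T ∈ L → p ∈ S → p ∈ T → S ≠ T → ∀ q, q ∈ S → q ∈ T → q = p := by
    intro S T hSL hTL hpS hpT hST q hqS hqT
    by_contra hqp
    exact hST (line_unique S T ((hmemL S).mp hSL).2.1 ((hmemL S).mp hSL).2.2
      ((hmemL T).mp hTL).2.1 ((hmemL T).mp hTL).2.2 p q hpS hqS hpT hqT (Ne.symm hqp))
  -- B is the union
  have hBu : B = S1 ∪ S2 ∪ S3 := by
    have hsub : S1 ∪ S2 ∪ S3 ⊆ B := by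
      intro q hq
      rcases Finset.mem_union.mp hq with hq | hq
      · rcases Finset.mem_union.mp hq with hq | hq
        · exact ((hmemL S1).mp hS1.1).1 hq
        · exact ((hmemL S2).mp hS2.1).1 hq
      · exact ((hmemL S3).mp hS3.1).1 hq
    have hi12 : S1 ∩ S2 = {p} := by
      ext q
      simp only [Finset.mem_inter, Finset.mem_singleton]
      constructor
      · rintro ⟨hq1, hq2⟩; exact inter_p S1 S2 hS1.1 hS2.1 hS1.2 hS2.2 h12 q hq1 hq2
      · rintro rfl; exact ⟨hS1.2, hS2.2⟩
    have hi3 : (S1 ∪ S2) ∩ S3 = {p} := by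
      ext q
      simp only [Finset.mem_inter, Finset.mem_union, Finset.mem_singleton]
      constructor
      · rintro ⟨hq12, hq3⟩
        rcases hq12 with hq1 | hq2
        · exact inter_p S1 S3 hS1.1 hS3.1 hS1.2 hS3.2 h13 q hq1 hq3
        · exact inter_p S2 S3 hS2.1 hS3.1 hS2.2 hS3.2 h23 q hq2 hq3
      · rintro rfl; exact ⟨Or.inl hS1.2, hS3.2⟩
    have hc12 : (S1 ∪ S2).card = 5 := by
      have := Finset.card_union_add_card_inter S1 S2
      rw [hi12, ((hmemL S1).mp hS1.1).2.1, ((hmemL S2).mp hS2.1).2.1, Finset.card_singleton] at this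
      omega
    have hc : (S1 ∪ S2 ∪ S3).card = 7 := by
      have := Finset.card_union_add_card_inter (S1 ∪ S2) S3
      rw [hi3, hc12, ((hmemL S3).mp hS3.1).2.1, Finset.card_singleton] at this
      omega
    exact (Finset.eq_of_subset_of_card_le hsub (by omega)).symm
  -- xy decompositions
  obtain ⟨x1, y1, hxy1, hpx1, hpy1, hSeq1⟩ := exists_xy S1 ((hmemL S1).mp hS1.1).2.1 p hS1.2
  obtain ⟨x2, y2, hxy2, hpx2, hpy2, hSeq2⟩ := exists_xy S2 ((hmemL S2).mp hS2.1).2.1 p hS2.2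
  obtain ⟨x3, y3, hxy3, hpx3, hpy3, hSeq3⟩ := exists_xy S3 ((hmemL S3).mp hS3.1).2.1 p hS3.2
  have hsum1 : x1 + y1 = -p := by
    have := ((hmemL S1).mp hS1.1).2.2
    rw [hSeq1, Finset.sum_insert (by simp [hpx1, hpy1]),
      Finset.sum_insert (Finset.notMem_singleton.mpr hxy1), Finset.sum_singleton] at this
    exact eq_neg_of_add_eq_zero_right this
  have hsum2 : x2 + y2 = -p := by
    have := ((hmemL S2).mp hS2.1).2.2
    rw [hSeq2, Finset.sum_insert (by simp [hpx2, hpy2]),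
      Finset.sum_insert (Finset.notMem_singleton.mpr hxy2), Finset.sum_singleton] at this
    exact eq_neg_of_add_eq_zero_right this
  have hsum3 : x3 + y3 = -p := by
    have := ((hmemL S3).mp hS3.1).2.2
    rw [hSeq3, Finset.sum_insert (by simp [hpx3, hpy3]),
      Finset.sum_insert (Finset.notMem_singleton.mpr hxy3), Finset.sum_singleton] at this
    exact eq_neg_of_add_eq_zero_right this
  -- key decomposition of off-lines
  have key : ∀ T ∈ L, p ∉ T → ∃ u1 u2 u3 : Pt,
      (u1 = x1 ∨ u1 = y1) ∧ (u2 = x2 ∨ u2 = y2) ∧ (u3 = x3 ∨ u3 = y3) ∧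
      u1 + u2 + u3 = 0 ∧ T = {u1, u2, u3} := by
    intro T hTL hpT
    have hT := (hmemL T).mp hTL
    have hint : ∀ S, S ∈ L → p ∈ S → (T ∩ S).card ≤ 1 := by
      intro S hSL hpS
      rw [Finset.card_le_one]
      intro a ha b hb
      by_contra hab
      obtain ⟨haT, haS⟩ := Finset.mem_inter.mp ha
      obtain ⟨hbT, hbS⟩ := Finset.mem_inter.mp hb
      have : T = S := line_unique T S hT.2.1 hT.2.2 ((hmemL S).mp hSL).2.1 ((hmemL S).mp hSL).2.2
        a b haT hbT haS hbS hab
      exact hpT (this ▸ hpS)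
    have hTdec : T = (T ∩ S1) ∪ (T ∩ S2) ∪ (T ∩ S3) := by
      calc T = T ∩ (S1 ∪ S2 ∪ S3) := by rw [← hBu]; exact (Finset.inter_eq_left.mpr hT.1).symm
        _ = (T ∩ S1) ∪ (T ∩ S2) ∪ (T ∩ S3) := by
            rw [Finset.inter_union_distrib_left, Finset.inter_union_distrib_left]
    have hc1 : (T ∩ S1).card = 1 ∧ (T ∩ S2).card = 1 ∧ (T ∩ S3).card = 1 := by
      have h1 := hint S1 hS1.1 hS1.2
      have h2 := hint S2 hS2.1 hS2.2
      have h3 := hint S3 hS3.1 hS3.2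
      have hle : T.card ≤ (T ∩ S1).card + (T ∩ S2).card + (T ∩ S3).card := by
        calc T.card = ((T ∩ S1) ∪ (T ∩ S2) ∪ (T ∩ S3)).card := by rw [← hTdec]
          _ ≤ ((T ∩ S1) ∪ (T ∩ S2)).card + (T ∩ S3).card := Finset.card_union_le _ _
          _ ≤ (T ∩ S1).card + (T ∩ S2).card + (T ∩ S3).card :=
              Nat.add_le_add_right (Finset.card_union_le _ _) _
      rw [hT.2.1] at hle
      omega
    obtain ⟨u1, hu1⟩ := Finset.card_eq_one.mp hc1.1
    obtain ⟨u2, hu2⟩ := Finset.card_eq_one.mp hc1.2.1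
    obtain ⟨u3, hu3⟩ := Finset.card_eq_one.mp hc1.2.2
    have hu1m : u1 ∈ T ∧ u1 ∈ S1 := Finset.mem_inter.mp (hu1 ▸ Finset.mem_singleton_self u1)
    have hu2m : u2 ∈ T ∧ u2 ∈ S2 := Finset.mem_inter.mp (hu2 ▸ Finset.mem_singleton_self u2)
    have hu3m : u3 ∈ T ∧ u3 ∈ S3 := Finset.mem_inter.mp (hu3 ▸ Finset.mem_singleton_self u3)
    have hu1p : u1 ≠ p := fun h => hpT (h ▸ hu1m.1)
    have hu2p : u2 ≠ p := fun h => hpT (h ▸ hu2m.1)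
    have hu3p : u3 ≠ p := fun h => hpT (h ▸ hu3m.1)
    have hd12 : u1 ≠ u2 := by
      intro h
      exact hu1p (inter_p S1 S2 hS1.1 hS2.1 hS1.2 hS2.2 h12 u1 hu1m.2 (h ▸ hu2m.2))
    have hd13 : u1 ≠ u3 := by
      intro h
      exact hu1p (inter_p S1 S3 hS1.1 hS3.1 hS1.2 hS3.2 h13 u1 hu1m.2 (h ▸ hu3m.2))
    have hd23 : u2 ≠ u3 := by
      intro h
      exact hu2p (inter_p S2 S3 hS2.1 hS3.1 hS2.2 hS3.2 h23 u2 hu2m.2 (h ▸ hu3m.2))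
    have hTeq : T = {u1, u2, u3} := by rw [hTdec, hu1, hu2, hu3]; ext q; simp [or_assoc]
    have hsumT : u1 + u2 + u3 = 0 := by
      have := hT.2.2
      rw [hTeq, Finset.sum_insert (by simp [hd12, hd13]),
        Finset.sum_insert (Finset.notMem_singleton.mpr hd23), Finset.sum_singleton] at this
      rw [← add_assoc] at this
      exact this
    have hux1 : u1 = x1 ∨ u1 = y1 := by
      have := hSeq1 ▸ hu1m.2
      simp only [Finset.mem_insert, Finset.mem_singleton] at this
      rcases this with h | h | h
      · exact absurd h hu1p
      · exact Or.inl h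
      · exact Or.inr h
    have hux2 : u2 = x2 ∨ u2 = y2 := by
      have := hSeq2 ▸ hu2m.2
      simp only [Finset.mem_insert, Finset.mem_singleton] at this
      rcases this with h | h | h
      · exact absurd h hu2p
      · exact Or.inl h
      · exact Or.inr h
    have hux3 : u3 = x3 ∨ u3 = y3 := by
      have := hSeq3 ▸ hu3m.2
      simp only [Finset.mem_insert, Finset.mem_singleton] at this
      rcases this with h | h | h
      · exact absurd h hu3p
      · exact Or.inl h
      · exact Or.inr h
    exact ⟨u1, u2, u3, hux1, hux2, hux3, hsumT, hTeq⟩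
  -- at least three off-lines
  have hoff : 3 ≤ (L.filter (fun S => p ∉ S)).card := by
    have := Finset.card_filter_add_card_filter_not (s := L) (p := fun S => p ∈ S)
    rw [hLp3] at this
    omega
  obtain ⟨Toff, hToffsub, hToff3⟩ := Finset.exists_subset_card_eq hoff
  obtain ⟨T1, T2, T3, hT12, hT13, hT23, hToffeq⟩ := Finset.card_eq_three.mp hToff3
  have hT1m : T1 ∈ L ∧ p ∉ T1 := Finset.mem_filter.mp (hToffsub (by rw [hToffeq]; simp))
  have hT2m : T2 ∈ L ∧ p ∉ T2 := Finset.mem_filter.mp (hToffsub (by rw [hToffeq]; simp))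
  have hT3m : T3 ∈ L ∧ p ∉ T3 := Finset.mem_filter.mp (hToffsub (by rw [hToffeq]; simp))
  obtain ⟨a1, a2, a3, ha1, ha2, ha3, hasum, haeq⟩ := key T1 hT1m.1 hT1m.2
  obtain ⟨b1, b2, b3, hb1, hb2, hb3, hbsum, hbeq⟩ := key T2 hT2m.1 hT2m.2
  obtain ⟨c1, c2, c3, hc1', hc2', hc3', hcsum, hceq⟩ := key T3 hT3m.1 hT3m.2
  -- disagreement lemma
  have dis : ∀ (u1 u2 u3 v1 v2 v3 : Pt),
      (u2 = x2 ∨ u2 = y2) → (u3 = x3 ∨ u3 = y3) →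
      (v2 = x2 ∨ v2 = y2) → (v3 = x3 ∨ v3 = y3) →
      u1 + u2 + u3 = 0 → v1 + v2 + v3 = 0 → u1 ≠ p →
      u1 = v1 → u2 = v2 ∧ u3 = v3 := by
    intro u1 u2 u3 v1 v2 v3 hu2 hu3 hv2 hv3 hsu hsv hu1p h1
    subst h1
    have h23 : u2 + u3 = v2 + v3 := by
      have h := hsu.trans hsv.symm
      rw [add_assoc, add_assoc] at h
      exact add_left_cancel h
    by_cases h2 : u2 = v2
    · subst h2
      exact ⟨rfl, add_left_cancel h23⟩
    · exfalso
      have hs2 : u2 + v2 = -p := by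
        rcases hu2 with rfl | rfl <;> rcases hv2 with rfl | rfl
        · exact absurd rfl h2
        · rw [hsum2]
        · rw [add_comm, hsum2]
        · exact absurd rfl h2
      by_cases h3 : u3 = v3
      · exact h2 (by subst h3; exact add_right_cancel h23)
      · have hs3 : u3 + v3 = -p := by
          rcases hu3 with rfl | rfl <;> rcases hv3 with rfl | rfl
          · exact absurd rfl h3
          · rw [hsum3]
          · rw [add_comm, hsum3]
          · exact absurd rfl h3
        exact hu1p (pt_zkey u1 u2 u3 v2 v3 p hsu hsv hs2 hs3)
    -- first coordinates pairwise distinct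
  have hne : ∀ (T T' : Finset Pt) (u1 u2 u3 v1 v2 v3 : Pt),
      (u2 = x2 ∨ u2 = y2) → (u3 = x3 ∨ u3 = y3) →
      (v2 = x2 ∨ v2 = y2) → (v3 = x3 ∨ v3 = y3) →
      u1 + u2 + u3 = 0 → v1 + v2 + v3 = 0 → (u1 = x1 ∨ u1 = y1) →
      T = {u1, u2, u3} → T' = {v1, v2, v3} → T ≠ T' → u1 ≠ v1 := by
    intro T T' u1 u2 u3 v1 v2 v3 hu2 hu3 hv2 hv3 hsu hsv hu1 hTeq hTeq' hTT' h1
    obtain ⟨h2, h3⟩ := dis u1 u2 u3 v1 v2 v3 hu2 hu3 hv2 hv3 hsu hsv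
      (by rcases hu1 with rfl | rfl; exact Ne.symm hpx1; exact Ne.symm hpy1) h1
    exact hTT' (by rw [hTeq, hTeq', h1, h2, h3])
  have hab : a1 ≠ b1 := hne T1 T2 a1 a2 a3 b1 b2 b3 ha2 ha3 hb2 hb3 hasum hbsum ha1 haeq hbeq hT12
  have hac : a1 ≠ c1 := hne T1 T3 a1 a2 a3 c1 c2 c3 ha2 ha3 hc2' hc3' hasum hcsum ha1 haeq hceq hT13
  have hbc : b1 ≠ c1 := hne T2 T3 b1 b2 b3 c1 c2 c3 hb2 hb3 hc2' hc3' hbsum hcsum hb1 hbeq hceq hT23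
  -- pigeonhole on {x1, y1}
  rcases ha1 with rfl | rfl <;> rcases hb1 with rfl | rfl <;> rcases hc1' with rfl | rfl <;>
    first | exact hab rfl | exact hac rfl | exact hbc rfl
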